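/- Let μ be a nonnegative measure on (0,∞) with ∫ min(1, 1/λ) dμ(λ) < ∞ and define φ(D) = ∫_0^∞ (1 − exp(−λD))/λ dμ(λ). Then the right derivative of φ at 0 satisfies lim_{D→0⁺} φ(D)/D = μ((0,∞)) (finite or +∞); in particular φ is rectifiable (φ'(0) < ∞) if and only if μ((0,∞)) < ∞. Moreover lim_{D→∞} φ(D) = ∫_0^∞ (1/λ) dμ(λ) (finite or +∞); in particular φ is bounded if and only if ∫_0^∞ (1/λ) dμ(λ) < ∞. -/

import Mathlib

open Finset MeasureTheory Set Filter Topology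
open scoped ENNReal

private lemma convexOn_exp_neg : ConvexOn ℝ Set.univ (fun x : ℝ => Real.exp (-x)) := by
  have := convexOn_exp.comp_affineMap (-(AffineMap.id ℝ ℝ))
  simpa [Function.comp_def] using this

/-- `(1 - exp (-x))/x` is antitone on `(0, ∞)`. -/
private lemma slope_anti {x y : ℝ} (hx : 0 < x) (hxy : x ≤ y) :
    (1 - Real.exp (-y)) / y ≤ (1 - Real.exp (-x)) / x := by
  have hy : 0 < y := hx.trans_le hxy
  have h := convexOn_exp_neg.secant_mono (a := 0) (x := x) (y := y)
    (Set.mem_univ _) (Set.mem_univ _) (Set.mem_univ _) (ne_of_gt hx) (ne_of_gt hy) hxy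
  simp only [Real.exp_zero, neg_zero, sub_zero] at h
  rw [div_le_div_iff₀ hy hx]
  rw [div_le_div_iff₀ hx hy] at h
  nlinarith

private lemma one_sub_exp_neg_le (x : ℝ) : 1 - Real.exp (-x) ≤ x := by
  have := Real.add_one_le_exp (-x)
  linarith

private lemma tendsto_one_sub_exp_div {u : ℕ → ℝ} (hu : Tendsto u atTop (𝓝[≠] (0:ℝ))) :
    Tendsto (fun n => (1 - Real.exp (-(u n))) / u n) atTop (𝓝 1) := by
  have h := hasDerivAt_iff_tendsto_slope.mp (Real.hasDerivAt_exp 0)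
  rw [Real.exp_zero] at h
  have hu' := tendsto_nhdsWithin_iff.mp hu
  have hneg : Tendsto (fun n => -(u n)) atTop (𝓝[≠] (0:ℝ)) := by
    rw [tendsto_nhdsWithin_iff]
    constructor
    · simpa using hu'.1.neg
    · filter_upwards [hu'.2] with n hn
      simpa using hn
  have := h.comp hneg
  refine this.congr fun n => ?_
  rw [Function.comp_apply, slope_def_field]
  rw [Real.exp_zero, sub_zero]
  rw [show Real.exp (-(u n)) - 1 = -(1 - Real.exp (-(u n))) by ring, neg_div_neg_eq]

/-- Rectifiability and boundedness of a Schoenberg transformation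
`φ(D) = ∫ (1 - exp (-λ D))/λ dμ(λ)` in terms of the measure `μ` on `(0,∞)`:
`φ(D)/D → μ((0,∞))` as `D → 0⁺` (finite or `+∞`, read in `ℝ≥0∞`), so `φ` is
rectifiable (has a finite right derivative at `0`) iff `μ((0,∞)) < ∞`; and
`φ(D) → ∫ (1/λ) dμ(λ)` as `D → ∞` (finite or `+∞`), so `φ` is bounded iff
`∫ (1/λ) dμ(λ) < ∞`. -/
theorem schoenberg_rectifiable_bounded (μ : Measure ℝ)
    (hμ : ∫⁻ l in Ioi (0 : ℝ), ENNReal.ofReal (min 1 (1 / l)) ∂μ ≠ ⊤)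
    (φ : ℝ → ℝ)
    (hφ : ∀ D : ℝ, φ D = ∫ l in Ioi (0 : ℝ), (1 - Real.exp (-(l * D))) / l ∂μ) :
    Tendsto (fun D => ENNReal.ofReal (φ D / D)) (𝓝[>] 0) (𝓝 (μ (Ioi 0))) ∧
    ((∃ c : ℝ, Tendsto (fun D => φ D / D) (𝓝[>] 0) (𝓝 c)) ↔ μ (Ioi 0) ≠ ⊤) ∧
    Tendsto (fun D => ENNReal.ofReal (φ D)) atTop
      (𝓝 (∫⁻ l in Ioi (0 : ℝ), ENNReal.ofReal (1 / l) ∂μ)) ∧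
    ((∃ c : ℝ, Tendsto φ atTop (𝓝 c)) ↔
      ∫⁻ l in Ioi (0 : ℝ), ENNReal.ofReal (1 / l) ∂μ ≠ ⊤) := by
  set I := ∫⁻ l in Ioi (0 : ℝ), ENNReal.ofReal (1 / l) ∂μ with hIdef
  have meas1 : ∀ D : ℝ, Measurable fun l : ℝ => (1 - Real.exp (-(l * D))) / l := by
    intro D; fun_prop
  have meas2 : ∀ D : ℝ, Measurable fun l : ℝ => (1 - Real.exp (-(l * D))) / (l * D) := by
    intro D; fun_prop
  have hnn : ∀ D : ℝ, 0 ≤ D → ∀ l ∈ Ioi (0:ℝ), 0 ≤ (1 - Real.exp (-(l * D))) / l := by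
    intro D hD l hl
    have hl0 : (0:ℝ) < l := hl
    have : Real.exp (-(l * D)) ≤ 1 := by
      rw [Real.exp_le_one_iff]
      nlinarith
    exact div_nonneg (by linarith) hl0.le
  have h_dom_nn : 0 ≤ᵐ[μ.restrict (Ioi (0:ℝ))] fun l => min 1 (1/l) := by
    filter_upwards [ae_restrict_mem measurableSet_Ioi] with l hl
    have hl0 : (0:ℝ) < l := hl
    exact le_min zero_le_one (by positivity)
  have h_int_dom : Integrable (fun l : ℝ => min 1 (1/l)) (μ.restrict (Ioi 0)) :=
    ⟨((measurable_const.min (measurable_const.div measurable_id)).aestronglyMeasurable),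
      (hasFiniteIntegral_iff_ofReal h_dom_nn).mpr hμ.lt_top⟩
  have h_int : ∀ D : ℝ, 0 < D →
      Integrable (fun l => (1 - Real.exp (-(l * D))) / l) (μ.restrict (Ioi 0)) := by
    intro D hD
    refine Integrable.mono' (h_int_dom.const_mul (max 1 D)) ((meas1 D).aestronglyMeasurable) ?_
    filter_upwards [ae_restrict_mem measurableSet_Ioi] with l hl
    have hl0 : (0:ℝ) < l := hl
    rw [Real.norm_eq_abs, abs_of_nonneg (hnn D hD.le l hl)]
    have hexp : (0:ℝ) ≤ Real.exp (-(l * D)) := (Real.exp_pos _).le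
    rcases le_total l 1 with h1 | h1
    · have hmin : min 1 (1/l) = 1 := min_eq_left (by rw [le_div_iff₀ hl0]; nlinarith)
      rw [hmin, mul_one]
      calc (1 - Real.exp (-(l*D)))/l ≤ (l*D)/l := by
            gcongr
            exact one_sub_exp_neg_le _
        _ = D := by field_simp
        _ ≤ max 1 D := le_max_right _ _
    · have hmin : min 1 (1/l) = 1/l := min_eq_right ((div_le_one hl0).mpr h1)
      rw [hmin]
      calc (1 - Real.exp (-(l*D)))/l ≤ 1/l := by gcongr; linarith
        _ ≤ max 1 D * (1/l) := le_mul_of_one_le_left (by positivity) (le_max_left _ _)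
  have hφnn : ∀ D : ℝ, 0 < D → 0 ≤ φ D := by
    intro D hD
    rw [hφ]
    exact setIntegral_nonneg measurableSet_Ioi (hnn D hD.le)
  set G : ℝ → ℝ≥0∞ := fun D => ∫⁻ l in Ioi (0:ℝ),
    ENNReal.ofReal ((1 - Real.exp (-(l * D))) / l) ∂μ with hGdef
  have hφG : ∀ D : ℝ, 0 < D → ENNReal.ofReal (φ D) = G D := by
    intro D hD
    rw [hφ]
    refine ofReal_integral_eq_lintegral_ofReal (h_int D hD) ?_
    filter_upwards [ae_restrict_mem measurableSet_Ioi] with l hl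
    exact hnn D hD.le l hl
  set G1 : ℝ → ℝ≥0∞ := fun D => ∫⁻ l in Ioi (0:ℝ),
    ENNReal.ofReal ((1 - Real.exp (-(l * D))) / (l * D)) ∂μ with hG1def
  have hnn1 : ∀ D : ℝ, 0 < D → ∀ l ∈ Ioi (0:ℝ),
      0 ≤ (1 - Real.exp (-(l * D))) / (l * D) := by
    intro D hD l hl
    have hl0 : (0:ℝ) < l := hl
    have : Real.exp (-(l * D)) ≤ 1 := by rw [Real.exp_le_one_iff]; nlinarith
    have : 0 ≤ 1 - Real.exp (-(l * D)) := by linarith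
    positivity
  have hφG1 : ∀ D : ℝ, 0 < D → ENNReal.ofReal (φ D / D) = G1 D := by
    intro D hD
    have heq : φ D / D = ∫ l in Ioi (0:ℝ), (1 - Real.exp (-(l * D))) / (l * D) ∂μ := by
      rw [hφ, ← integral_div]
      simp only [div_div]
    rw [heq]
    refine ofReal_integral_eq_lintegral_ofReal ?_ ?_
    · refine ((h_int D hD).div_const D).congr ?_
      exact Eventually.of_forall fun l => div_div _ _ _
    · filter_upwards [ae_restrict_mem measurableSet_Ioi] with l hl
      exact hnn1 D hD l hl
  have hG1anti : AntitoneOn G1 (Ioi (0:ℝ)) := by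
    intro D1 h1 D2 h2 h12
    refine setLIntegral_mono ((meas2 D1).ennreal_ofReal) fun l hl => ?_
    have hl0 : (0:ℝ) < l := hl
    exact ENNReal.ofReal_le_ofReal
      (slope_anti (mul_pos hl0 h1) (by nlinarith))
  have hG1le : ∀ D ∈ Ioi (0:ℝ), G1 D ≤ μ (Ioi 0) := by
    intro D hD
    calc G1 D ≤ ∫⁻ _ in Ioi (0:ℝ), 1 ∂μ := by
          refine setLIntegral_mono measurable_const fun l hl => ?_
          have hl0 : (0:ℝ) < l := hl
          have hD0 : (0:ℝ) < D := hD
          rw [ENNReal.ofReal_le_one, div_le_one (mul_pos hl0 hD0)]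
          exact one_sub_exp_neg_le _
      _ = μ (Ioi 0) := setLIntegral_one _
  have h_seq : Tendsto (fun n : ℕ => G1 (1/(n+1))) atTop (𝓝 (μ (Ioi 0))) := by
    rw [← setLIntegral_one (Ioi (0:ℝ))]
    refine lintegral_tendsto_of_tendsto_of_monotone
      (fun n => ((meas2 (1/(n+1))).ennreal_ofReal).aemeasurable) ?_ ?_
    · filter_upwards [ae_restrict_mem measurableSet_Ioi] with l hl
      intro n m hnm
      have hl0 : (0:ℝ) < l := hl
      refine ENNReal.ofReal_le_ofReal (slope_anti (by positivity) ?_)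
      have : (1:ℝ)/(m+1) ≤ 1/(n+1) := by
        apply one_div_le_one_div_of_le (by positivity)
        have : (n:ℝ) ≤ m := by exact_mod_cast hnm
        linarith
      nlinarith
    · filter_upwards [ae_restrict_mem measurableSet_Ioi] with l hl
      have hl0 : (0:ℝ) < l := hl
      have key : Tendsto (fun n : ℕ =>
          (1 - Real.exp (-(l * (1/(n+1))))) / (l * (1/(n+1)))) atTop (𝓝 1) := by
        apply tendsto_one_sub_exp_div
        rw [tendsto_nhdsWithin_iff]
        constructor
        · have := tendsto_one_div_add_atTop_nhds_zero_nat.const_mul l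
          simpa using this
        · exact Eventually.of_forall fun n =>
            (by positivity : (0:ℝ) < l * (1/(n+1))).ne'
      have := (ENNReal.continuous_ofReal.tendsto 1).comp key
      simpa [Function.comp_def] using this
  have htends := hG1anti.tendsto_nhdsGT (OrderTop.bddAbove _)
  have hsup : sSup (G1 '' Ioi (0:ℝ)) = μ (Ioi 0) := by
    apply le_antisymm
    · apply sSup_le
      rintro x ⟨D, hD, rfl⟩
      exact hG1le D hD
    · refine le_of_tendsto h_seq (Eventually.of_forall fun n =>
        le_sSup ⟨1/(n+1), Set.mem_Ioi.mpr (by positivity), rfl⟩)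
  rw [hsup] at htends
  have hpart1 : Tendsto (fun D => ENNReal.ofReal (φ D / D)) (𝓝[>] (0:ℝ)) (𝓝 (μ (Ioi 0))) := by
    refine Filter.Tendsto.congr' ?_ htends
    filter_upwards [self_mem_nhdsWithin] with D hD
    exact (hφG1 D hD).symm
  have hpart2 : (∃ c : ℝ, Tendsto (fun D => φ D / D) (𝓝[>] (0:ℝ)) (𝓝 c)) ↔
      μ (Ioi (0:ℝ)) ≠ ⊤ := by
    constructor
    · rintro ⟨c, hc⟩
      have := tendsto_nhds_unique hpart1 ((ENNReal.continuous_ofReal.tendsto c).comp hc)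
      rw [this]
      exact ENNReal.ofReal_ne_top
    · intro h
      refine ⟨(μ (Ioi (0:ℝ))).toReal, ?_⟩
      have h2 := (ENNReal.tendsto_toReal h).comp hpart1
      refine Filter.Tendsto.congr' ?_ h2
      filter_upwards [self_mem_nhdsWithin] with D hD
      simp only [Function.comp_apply]
      rw [ENNReal.toReal_ofReal (div_nonneg (hφnn D hD) (le_of_lt hD))]
  have hptmono : ∀ l ∈ Ioi (0:ℝ), ∀ D1 D2 : ℝ, D1 ≤ D2 →
      (1 - Real.exp (-(l * D1))) / l ≤ (1 - Real.exp (-(l * D2))) / l := by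
    intro l hl D1 D2 h12
    have hl0 : (0:ℝ) < l := hl
    have : Real.exp (-(l * D2)) ≤ Real.exp (-(l * D1)) :=
      Real.exp_le_exp.mpr (by nlinarith)
    gcongr
  have hGmono : Monotone G := by
    intro D1 D2 h12
    refine setLIntegral_mono ((meas1 D2).ennreal_ofReal) fun l hl => ?_
    exact ENNReal.ofReal_le_ofReal (hptmono l hl D1 D2 h12)
  have hItop : Tendsto G atTop (𝓝 (⨆ D : ℝ, G D)) := tendsto_atTop_iSup hGmono
  have hseq3 : Tendsto (fun n : ℕ => G (n:ℝ)) atTop (𝓝 I) := by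
    refine lintegral_tendsto_of_tendsto_of_monotone
      (fun n => ((meas1 (n:ℝ)).ennreal_ofReal).aemeasurable) ?_ ?_
    · filter_upwards [ae_restrict_mem measurableSet_Ioi] with l hl
      intro n m hnm
      exact ENNReal.ofReal_le_ofReal (hptmono l hl _ _ (by exact_mod_cast hnm))
    · filter_upwards [ae_restrict_mem measurableSet_Ioi] with l hl
      have hl0 : (0:ℝ) < l := hl
      have hexp : Tendsto (fun n : ℕ => Real.exp (-(l * n))) atTop (𝓝 0) := by
        apply Real.tendsto_exp_atBot.comp
        have h1 : Tendsto (fun n : ℕ => l * (n:ℝ)) atTop atTop :=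
          Tendsto.const_mul_atTop hl0 tendsto_natCast_atTop_atTop
        exact tendsto_neg_atBot_iff.mpr h1
      have key : Tendsto (fun n : ℕ => (1 - Real.exp (-(l * n))) / l) atTop (𝓝 (1/l)) := by
        have := ((tendsto_const_nhds (x := (1:ℝ))).sub hexp).div_const l
        simpa using this
      exact (ENNReal.continuous_ofReal.tendsto _).comp key
  have hsup3 : (⨆ D : ℝ, G D) = I := by
    apply le_antisymm
    · refine iSup_le fun D => ?_
      refine setLIntegral_mono ((measurable_const.div measurable_id).ennreal_ofReal)
        fun l hl => ?_
      have hl0 : (0:ℝ) < l := hl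
      refine ENNReal.ofReal_le_ofReal ?_
      gcongr
      have := (Real.exp_pos (-(l * D))).le
      linarith
    · exact le_of_tendsto hseq3 (Eventually.of_forall fun n => le_iSup G (n : ℝ))
  have hpart3 : Tendsto (fun D => ENNReal.ofReal (φ D)) atTop (𝓝 I) := by
    refine Filter.Tendsto.congr' ?_ (hsup3 ▸ hItop)
    filter_upwards [eventually_gt_atTop 0] with D hD
    exact (hφG D hD).symm
  have hpart4 : (∃ c : ℝ, Tendsto φ atTop (𝓝 c)) ↔ I ≠ ⊤ := by
    constructor
    · rintro ⟨c, hc⟩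
      have := tendsto_nhds_unique hpart3 ((ENNReal.continuous_ofReal.tendsto c).comp hc)
      rw [this]
      exact ENNReal.ofReal_ne_top
    · intro h
      refine ⟨I.toReal, ?_⟩
      have h2 := (ENNReal.tendsto_toReal h).comp hpart3
      refine Filter.Tendsto.congr' ?_ h2
      filter_upwards [eventually_gt_atTop 0] with D hD
      simp only [Function.comp_apply]
      rw [ENNReal.toReal_ofReal (hφnn D hD)]
  exact ⟨hpart1, hpart2, hpart3, hpart4⟩
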